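/- Suppose W̃ ∈ ℂ^{k×d}, v ∈ ℂ^k, and set M̃ = W̃ᵀ diag(v) W̃. If Σ_{i=1}^n (x_iᵀ M̃ x_i − y_i)* x_i x_iᵀ = 0 (the zero d×d matrix), then for every W ∈ ℂ^{k×d}, (1/(2n)) Σ_i ‖x_iᵀ Wᵀ diag(v) W x_i − y_i‖² ≥ (1/(2n)) Σ_i ‖x_iᵀ M̃ x_i − y_i‖². That is, W̃ is a global minimizer of the quadratic-network loss. -/

import Mathlib

open Matrix

theorem stmt_5 {n k d : ℕ} (x : Fin n → Fin d → ℂ) (y : Fin n → ℂ)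
    (v : Fin k → ℂ) (W₀ : Matrix (Fin k) (Fin d) ℂ)
    (M₀ : Matrix (Fin d) (Fin d) ℂ) (hM₀ : M₀ = W₀ᵀ * Matrix.diagonal v * W₀)
    (hopt : ∑ i, (starRingEnd ℂ (x i ⬝ᵥ M₀.mulVec (x i) - y i)) •
        Matrix.vecMulVec (x i) (x i) = 0) :
    ∀ W : Matrix (Fin k) (Fin d) ℂ,
      (1 / (2 * (n : ℝ))) * ∑ i,
          ‖x i ⬝ᵥ (Wᵀ * Matrix.diagonal v * W).mulVec (x i) - y i‖ ^ 2 ≥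
      (1 / (2 * (n : ℝ))) * ∑ i, ‖x i ⬝ᵥ M₀.mulVec (x i) - y i‖ ^ 2 := by
  intro W
  set r : Fin n → ℂ := fun i => x i ⬝ᵥ M₀.mulVec (x i) - y i with hr
  have hentry : ∀ p q, ∑ i, (starRingEnd ℂ) (r i) * (x i p * x i q) = 0 := by
    intro p q
    have h := congrFun (congrFun hopt p) q
    simp only [Matrix.sum_apply, Matrix.smul_apply, Matrix.vecMulVec_apply, smul_eq_mul,
      Matrix.zero_apply, mul_assoc] at h
    exact h
  have key : ∀ (A : Matrix (Fin d) (Fin d) ℂ),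
      ∑ i, (starRingEnd ℂ) (r i) * (x i ⬝ᵥ A.mulVec (x i)) = 0 := by
    intro A
    have h1 : ∀ i, (starRingEnd ℂ) (r i) * (x i ⬝ᵥ A.mulVec (x i))
        = ∑ p, ∑ q, A p q * ((starRingEnd ℂ) (r i) * (x i p * x i q)) := by
      intro i
      simp only [dotProduct, Matrix.mulVec, Finset.mul_sum]
      refine Finset.sum_congr rfl fun p _ => Finset.sum_congr rfl fun q _ => by ring
    calc ∑ i, (starRingEnd ℂ) (r i) * (x i ⬝ᵥ A.mulVec (x i))
        = ∑ i, ∑ p, ∑ q, A p q * ((starRingEnd ℂ) (r i) * (x i p * x i q)) := by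
          exact Finset.sum_congr rfl fun i _ => h1 i
      _ = ∑ p, ∑ q, A p q * ∑ i, (starRingEnd ℂ) (r i) * (x i p * x i q) := by
          rw [Finset.sum_comm]
          refine Finset.sum_congr rfl fun p _ => ?_
          rw [Finset.sum_comm]
          refine Finset.sum_congr rfl fun q _ => ?_
          rw [Finset.mul_sum]
      _ = 0 := by simp [hentry]
  set a : Fin n → ℂ := fun i =>
    x i ⬝ᵥ (Wᵀ * Matrix.diagonal v * W - M₀).mulVec (x i) with ha
  have hdecomp : ∀ i, x i ⬝ᵥ (Wᵀ * Matrix.diagonal v * W).mulVec (x i) - y i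
      = a i + r i := by
    intro i
    simp only [ha, hr, Matrix.sub_mulVec, dotProduct_sub]
    ring
  have hcross : (∑ i, a i * (starRingEnd ℂ) (r i)) = 0 := by
    have := key (Wᵀ * Matrix.diagonal v * W - M₀)
    rw [← this]
    exact Finset.sum_congr rfl fun i _ => by ring
  have hsum : ∑ i, ‖x i ⬝ᵥ (Wᵀ * Matrix.diagonal v * W).mulVec (x i) - y i‖ ^ 2
      = (∑ i, Complex.normSq (a i)) + ∑ i, Complex.normSq (r i) := by
    have h2 : ∀ i, ‖x i ⬝ᵥ (Wᵀ * Matrix.diagonal v * W).mulVec (x i) - y i‖ ^ 2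
        = Complex.normSq (a i) + Complex.normSq (r i) + 2 * (a i * (starRingEnd ℂ) (r i)).re := by
      intro i
      rw [hdecomp i, Complex.sq_norm, Complex.normSq_add]
    rw [Finset.sum_congr rfl fun i _ => h2 i]
    rw [Finset.sum_add_distrib, Finset.sum_add_distrib, ← Finset.mul_sum, ← Complex.re_sum,
      hcross]
    simp
  have hR : ∑ i, ‖x i ⬝ᵥ M₀.mulVec (x i) - y i‖ ^ 2 = ∑ i, Complex.normSq (r i) := by
    refine Finset.sum_congr rfl fun i _ => ?_
    rw [Complex.sq_norm]
  rw [ge_iff_le, hR, hsum]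
  have h0 : (0:ℝ) ≤ 1 / (2 * (n : ℝ)) := by positivity
  have h1 : (0:ℝ) ≤ ∑ i, Complex.normSq (a i) :=
    Finset.sum_nonneg fun i _ => Complex.normSq_nonneg _
  nlinarith [mul_nonneg h0 h1]
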